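/- For every probability measure μ on E_Δ, the filtration (M^μ_t)_{t≥0} is right continuous, i.e. M^μ_t = ∩_{s>t} M^μ_s for all t ≥ 0; consequently the filtration (M_t)_{t≥0} is right continuous, i.e. M_t = ∩_{s>t} M_s for all t ≥ 0. -/

import Mathlib

open MeasureTheory Set Filter
open scoped NNReal ENNReal

noncomputable section

variable {S : Type*} [MeasurableSpace S] {Ω : Type*}

/-- The natural filtration `F⁰_t = σ(X_s : s ∈ [0,t])` of the process `X`. -/
def F0 (X : ℝ≥0 → Ω → S) (t : ℝ≥0) : MeasurableSpace Ω :=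
  ⨆ s ∈ Set.Iic t, MeasurableSpace.comap (X s) inferInstance

/-- `F⁰_∞ = σ(X_s : s ≥ 0)`. -/
def F0inf (X : ℝ≥0 → Ω → S) : MeasurableSpace Ω :=
  ⨆ s : ℝ≥0, MeasurableSpace.comap (X s) inferInstance

/-- `F⁰_{t+} = ⋂_{s > t} F⁰_s`. -/
def F0plus (X : ℝ≥0 → Ω → S) (t : ℝ≥0) : MeasurableSpace Ω :=
  ⨅ s ∈ Set.Ioi t, F0 X s

/-- The life time `ζ(ω) = inf {t ≥ 0 : X_t(ω) = Δ}` (with value `∞` if the path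
never reaches the cemetery `Δ`). -/
def lifetime (Δ : S) (X : ℝ≥0 → Ω → S) (ω : Ω) : ℝ≥0∞ :=
  ⨅ (t : ℝ≥0) (_ : X t ω = Δ), (t : ℝ≥0∞)

variable (Δ : S)

/-- `Q̄_{x,t}[f ; t < ζ] := h(x)·E^h_x[e^{αt}·f/h(X_t) ; t < ζ]`, the σ-finite
distribution up to time `t` applied to a nonnegative integrand `f`. -/
def Qbar (α : ℝ) (h : S → ℝ≥0∞) (X : ℝ≥0 → Ω → S)
    (P : S → @Measure Ω (F0inf X)) (x : S) (t : ℝ≥0) (f : Ω → ℝ≥0∞) : ℝ≥0∞ :=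
  h x * ∫⁻ ω in {ω | (t : ℝ≥0∞) < lifetime Δ X ω},
      ENNReal.ofReal (Real.exp (α * (t : ℝ))) * f ω * (h (X t ω))⁻¹ ∂(P x)

/-- `Q̄_{x,t}(Λ ; t < ζ)` of a set `Λ`. -/
def QbarSet (α : ℝ) (h : S → ℝ≥0∞) (X : ℝ≥0 → Ω → S)
    (P : S → @Measure Ω (F0inf X)) (x : S) (t : ℝ≥0) (Λ : Set Ω) : ℝ≥0∞ :=
  Qbar Δ α h X P x t (Λ.indicator 1)

/-- `Q̄_{μ,t}(Λ ; t < ζ) = ∫ Q̄_{x,t}(Λ ; t < ζ) μ(dx)` (note `Q̄_{Δ,t} = 0`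
automatically since `h Δ = 0`). -/
def Qmu (α : ℝ) (h : S → ℝ≥0∞) (X : ℝ≥0 → Ω → S)
    (P : S → @Measure Ω (F0inf X)) (μ : Measure S) (t : ℝ≥0) (Λ : Set Ω) : ℝ≥0∞ :=
  ∫⁻ x, QbarSet Δ α h X P x t Λ ∂μ

/-- `P^h_μ(Λ) = ∫ P^h_x(Λ) μ(dx)`. -/
def Pmu (X : ℝ≥0 → Ω → S) (P : S → @Measure Ω (F0inf X)) (μ : Measure S)
    (Λ : Set Ω) : ℝ≥0∞ :=
  ∫⁻ x, P x Λ ∂μ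

/-- `P^h_μ(Λ ; t < ζ)`. -/
def PmuT (X : ℝ≥0 → Ω → S) (P : S → @Measure Ω (F0inf X)) (μ : Measure S)
    (t : ℝ≥0) (Λ : Set Ω) : ℝ≥0∞ :=
  ∫⁻ x, P x (Λ ∩ {ω | (t : ℝ≥0∞) < lifetime Δ X ω}) ∂μ

/-- The augmented σ-field `M^μ_t`. -/
def Mmu (α : ℝ) (h : S → ℝ≥0∞) (X : ℝ≥0 → Ω → S)
    (P : S → @Measure Ω (F0inf X)) (μ : Measure S) (t : ℝ≥0) : Set (Set Ω) :=
  {Λ | ∃ Λ' Γ : Set Ω, MeasurableSet[F0 X t] Λ' ∧ MeasurableSet[F0plus X t] Γ ∧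
      symmDiff Λ Λ' ⊆ Γ ∧ ∀ T : ℝ≥0, t < T → Qmu Δ α h X P μ T Γ = 0}

/-- The auxiliary family `G^{μ,1}_t`. -/
def Gmu1 (α : ℝ) (h : S → ℝ≥0∞) (X : ℝ≥0 → Ω → S)
    (P : S → @Measure Ω (F0inf X)) (μ : Measure S) (t : ℝ≥0) : Set (Set Ω) :=
  {Λ | ∃ Λ' Γ : Set Ω, MeasurableSet[F0 X t] Λ' ∧ MeasurableSet[F0plus X t] Γ ∧
      symmDiff Λ Λ' ⊆ Γ ∧ PmuT Δ X P μ t Γ = 0}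

/-- The auxiliary family `G^{μ,2}_t`. -/
def Gmu2 (α : ℝ) (h : S → ℝ≥0∞) (X : ℝ≥0 → Ω → S)
    (P : S → @Measure Ω (F0inf X)) (μ : Measure S) (t : ℝ≥0) : Set (Set Ω) :=
  {Λ | ∃ Λ' Γ : Set Ω, MeasurableSet[F0plus X t] Λ' ∧ MeasurableSet[F0plus X t] Γ ∧
      symmDiff Λ Λ' ⊆ Γ ∧ PmuT Δ X P μ t Γ = 0}

/-- The `P^h_μ`-augmentation `F^{h,μ}_t` of `F⁰_t` in `F⁰_∞`. -/
def Fhmu (X : ℝ≥0 → Ω → S) (P : S → @Measure Ω (F0inf X)) (μ : Measure S)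
    (t : ℝ≥0) : Set (Set Ω) :=
  {Λ | ∃ Λ' Γ : Set Ω, MeasurableSet[F0 X t] Λ' ∧ MeasurableSet[F0inf X] Γ ∧
      symmDiff Λ Λ' ⊆ Γ ∧ Pmu X P μ Γ = 0}

/-- `M_t = ⋂_μ M^μ_t`, the intersection over all probability measures `μ` on `E_Δ`. -/
def Mt (α : ℝ) (h : S → ℝ≥0∞) (X : ℝ≥0 → Ω → S)
    (P : S → @Measure Ω (F0inf X)) (t : ℝ≥0) : Set (Set Ω) :=
  {Λ | ∀ μ : Measure S, IsProbabilityMeasure μ → Λ ∈ Mmu Δ α h X P μ t}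

/-- `M_∞ = σ(⋃_t M_t)`. -/
def Minf (α : ℝ) (h : S → ℝ≥0∞) (X : ℝ≥0 → Ω → S)
    (P : S → @Measure Ω (F0inf X)) : MeasurableSpace Ω :=
  MeasurableSpace.generateFrom {Λ | ∃ t : ℝ≥0, Λ ∈ Mt Δ α h X P t}

/-- `M^μ_∞ = σ(⋃_t M^μ_t)`. -/
def Mmuinf (α : ℝ) (h : S → ℝ≥0∞) (X : ℝ≥0 → Ω → S)
    (P : S → @Measure Ω (F0inf X)) (μ : Measure S) : MeasurableSpace Ω :=
  MeasurableSpace.generateFrom {Λ | ∃ t : ℝ≥0, Λ ∈ Mmu Δ α h X P μ t}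

/-- `M_σ` for an `(M_t)`-stopping time `σ`. -/
def Msigma (α : ℝ) (h : S → ℝ≥0∞) (X : ℝ≥0 → Ω → S)
    (P : S → @Measure Ω (F0inf X)) (σ : Ω → ℝ≥0∞) : Set (Set Ω) :=
  {Λ | MeasurableSet[Minf Δ α h X P] Λ ∧
      ∀ t : ℝ≥0, Λ ∩ {ω | σ ω ≤ (t : ℝ≥0∞)} ∈ Mt Δ α h X P t}

/-- `M^μ_σ` for an `(M^μ_t)`-stopping time `σ`. -/
def Mmusigma (α : ℝ) (h : S → ℝ≥0∞) (X : ℝ≥0 → Ω → S)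
    (P : S → @Measure Ω (F0inf X)) (μ : Measure S) (σ : Ω → ℝ≥0∞) : Set (Set Ω) :=
  {Λ | MeasurableSet[Mmuinf Δ α h X P μ] Λ ∧
      ∀ t : ℝ≥0, Λ ∩ {ω | σ ω ≤ (t : ℝ≥0∞)} ∈ Mmu Δ α h X P μ t}

/-- `F^{h,μ}_T` for an `(F^{h,μ}_t)`-stopping time `T`. -/
def FhmuStop (X : ℝ≥0 → Ω → S) (P : S → @Measure Ω (F0inf X)) (μ : Measure S)
    (T : Ω → ℝ≥0∞) : Set (Set Ω) :=
  {Λ | ∀ t : ℝ≥0, Λ ∩ {ω | T ω ≤ (t : ℝ≥0∞)} ∈ Fhmu X P μ t}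

/-- `X_σ`, with the convention `X_∞ = Δ`. -/
def Xstop (X : ℝ≥0 → Ω → S) (σ : Ω → ℝ≥0∞) (ω : Ω) : S :=
  if σ ω < ∞ then X (σ ω).toNNReal ω else Δ

/-- The shift `θ_σ` at a random time `σ`. -/
def thetaStop (θ : ℝ≥0 → Ω → Ω) (σ : Ω → ℝ≥0∞) (ω : Ω) : Ω :=
  θ (σ ω).toNNReal ω

/-- `Q̄_{x,σ}[f ; σ < ζ] := h(x)·E^h_x[e^{ασ}·f/h(X_σ) ; σ < ζ]`, the σ-finite
distribution up to a stopping time `σ` applied to a nonnegative integrand `f`. -/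
def QbarStop (α : ℝ) (h : S → ℝ≥0∞) (X : ℝ≥0 → Ω → S)
    (P : S → @Measure Ω (F0inf X)) (x : S) (σ : Ω → ℝ≥0∞) (f : Ω → ℝ≥0∞) : ℝ≥0∞ :=
  h x * ∫⁻ ω in {ω | σ ω < lifetime Δ X ω},
      ENNReal.ofReal (Real.exp (α * (σ ω).toReal)) * f ω * (h (Xstop Δ X σ ω))⁻¹ ∂(P x)

/-- `Q̄_{x,σ}(Λ ; σ < ζ)` of a set `Λ`. -/
def QbarStopSet (α : ℝ) (h : S → ℝ≥0∞) (X : ℝ≥0 → Ω → S)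
    (P : S → @Measure Ω (F0inf X)) (x : S) (σ : Ω → ℝ≥0∞) (Λ : Set Ω) : ℝ≥0∞ :=
  QbarStop Δ α h X P x σ (Λ.indicator 1)

/-- The entrance time `D_B = inf {t ≥ 0 : X_t ∈ B}`. -/
def entranceTime (B : Set S) (X : ℝ≥0 → Ω → S) (ω : Ω) : ℝ≥0∞ :=
  ⨅ (t : ℝ≥0) (_ : X t ω ∈ B), (t : ℝ≥0∞)

/-- The hitting time `σ_B = inf {t > 0 : X_t ∈ B}`. -/
def hittingTime (B : Set S) (X : ℝ≥0 → Ω → S) (ω : Ω) : ℝ≥0∞ :=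
  ⨅ (t : ℝ≥0) (_ : 0 < t ∧ X t ω ∈ B), (t : ℝ≥0∞)

/-- A set is universally measurable (`∈ B(E_Δ)*`) if it lies in the completion of
`B(E_Δ)` with respect to every probability measure. -/
def UniversallyMeasurableSet (A : Set S) : Prop :=
  ∀ ν : Measure S, IsProbabilityMeasure ν → NullMeasurableSet A ν

/-- Iterated kernel integral
`∫ κ_{t₁-t₀}(x,dx₁) ∫ κ_{t₂-t₁}(x₁,dx₂) ⋯ f(x₁,…,xₙ)`, where `t₀` is the
starting time. -/
def iterK (κ : ℝ≥0 → S → Measure S) :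
    (n : ℕ) → (Fin (n + 1) → ℝ≥0) → ℝ≥0 → S → ((Fin (n + 1) → S) → ℝ≥0∞) → ℝ≥0∞
  | 0, t, t0, x, f => ∫⁻ y, f (fun _ => y) ∂(κ (t 0 - t0) x)
  | n + 1, t, t0, x, f =>
      ∫⁻ y, iterK κ n (fun i => t i.succ) (t 0) y (fun v => f (Fin.cons y v))
        ∂(κ (t 0 - t0) x)


/-- `γ = (σ + τ∘θ_σ)_ζ`, the time `σ + τ∘θ_σ` truncated to `∞` off `{σ + τ∘θ_σ < ζ}`. -/
def gammaTime (Δ : S) (X : ℝ≥0 → Ω → S) (θ : ℝ≥0 → Ω → Ω) (σ τ : Ω → ℝ≥0∞)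
    (ω : Ω) : ℝ≥0∞ :=
  if σ ω + τ (thetaStop θ σ ω) < lifetime Δ X ω then σ ω + τ (thetaStop θ σ ω)
  else ∞

end


section Aux1

variable {S : Type*} [MeasurableSpace S] {Ω : Type*} {X : ℝ≥0 → Ω → S}

lemma F0_mono (X : ℝ≥0 → Ω → S) {s u : ℝ≥0} (h : s ≤ u) : F0 X s ≤ F0 X u :=
  biSup_mono fun _ hr => le_trans hr h

lemma F0_le_F0inf (X : ℝ≥0 → Ω → S) (t : ℝ≥0) : F0 X t ≤ F0inf X :=
  iSup₂_le fun s _ => le_iSup (fun u => MeasurableSpace.comap (X u) inferInstance) s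

lemma F0plus_le (X : ℝ≥0 → Ω → S) {t u : ℝ≥0} (h : t < u) : F0plus X t ≤ F0 X u :=
  biInf_le _ h

lemma F0_le_F0plus (X : ℝ≥0 → Ω → S) (t : ℝ≥0) : F0 X t ≤ F0plus X t :=
  le_iInf₂ fun _ hu => F0_mono X (le_of_lt hu)

lemma F0plus_mono (X : ℝ≥0 → Ω → S) {t s : ℝ≥0} (h : t ≤ s) : F0plus X t ≤ F0plus X s :=
  le_iInf₂ fun _ hu => biInf_le _ (lt_of_le_of_lt h hu)

lemma F0plus_le_F0inf (X : ℝ≥0 → Ω → S) (t : ℝ≥0) : F0plus X t ≤ F0inf X :=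
  (F0plus_le X (lt_add_one t)).trans (F0_le_F0inf X (t + 1))

lemma measurable_X_F0 {s t : ℝ≥0} (h : s ≤ t) : Measurable[F0 X t] (X s) :=
  measurable_iff_comap_le.2 <|
    le_iSup₂ (f := fun (u : ℝ≥0) (_ : u ∈ Set.Iic t) => MeasurableSpace.comap (X u) inferInstance)
      s h

lemma measurable_X_inf (s : ℝ≥0) : Measurable[F0inf X] (X s) :=
  measurable_iff_comap_le.2 <|
    le_iSup (fun u => MeasurableSpace.comap (X u) inferInstance) s

lemma theta_measurable {θ : ℝ≥0 → Ω → Ω}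
    (hshift : ∀ (s t : ℝ≥0) (ω : Ω), X t (θ s ω) = X (t + s) ω) (t : ℝ≥0) :
    @Measurable Ω Ω (F0inf X) (F0inf X) (θ t) := by
  rw [measurable_iff_comap_le]
  show MeasurableSpace.comap (θ t) (F0inf X) ≤ F0inf X
  rw [F0inf, MeasurableSpace.comap_iSup]
  refine iSup_le fun s => ?_
  rw [MeasurableSpace.comap_comp]
  have : X s ∘ θ t = X (s + t) := funext fun ω => hshift t s ω
  rw [this]
  exact le_iSup (fun u => MeasurableSpace.comap (X u) inferInstance) (s + t)

/-- The sequence `1/(n+1)`. -/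
noncomputable def del (n : ℕ) : ℝ≥0 := ((n : ℝ≥0) + 1)⁻¹

lemma del_pos (n : ℕ) : 0 < del n := by
  have : (0 : ℝ≥0) < (n : ℝ≥0) + 1 := by positivity
  exact inv_pos.2 this

lemma del_antitone : Antitone del := fun n m h => by
  have h1 : (0 : ℝ≥0) < (n : ℝ≥0) + 1 := by positivity
  exact inv_anti₀ h1 (by exact_mod_cast add_le_add_left (Nat.cast_le.2 h) 1)

lemma exists_del_le {ε : ℝ≥0} (hε : 0 < ε) : ∃ n : ℕ, del n ≤ ε := by
  obtain ⟨n, hn⟩ := exists_nat_ge ε⁻¹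
  refine ⟨n, ?_⟩
  have h1 : (0 : ℝ≥0) < ε⁻¹ := inv_pos.2 hε
  have h2 : ε⁻¹ ≤ (n : ℝ≥0) + 1 := hn.trans (le_add_of_nonneg_right zero_le_one)
  calc del n = ((n : ℝ≥0) + 1)⁻¹ := rfl
    _ ≤ (ε⁻¹)⁻¹ := inv_anti₀ h1 h2
    _ = ε := inv_inv ε

end Aux1

section Aux2

variable {S : Type*} [MeasurableSpace S] {Ω : Type*} {X : ℝ≥0 → Ω → S} {Δ : S}

lemma lifetime_le {ω : Ω} {u : ℝ≥0} (h : X u ω = Δ) : lifetime Δ X ω ≤ u :=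
  iInf₂_le u h

lemma X_ne_of_lt_lifetime {ω : Ω} {T : ℝ≥0} (h : (T : ℝ≥0∞) < lifetime Δ X ω) :
    X T ω ≠ Δ := fun hx => absurd (lifetime_le hx) (not_le.2 h)

lemma lifetime_le_iff (hX_absorb : ∀ (ω : Ω) (s t : ℝ≥0), s ≤ t → X s ω = Δ → X t ω = Δ)
    (T : ℝ≥0) (ω : Ω) :
    lifetime Δ X ω ≤ T ↔ ∀ n : ℕ, X (T + del n) ω = Δ := by
  constructor
  · intro hle n
    have hlt : lifetime Δ X ω < ((T + del n : ℝ≥0) : ℝ≥0∞) := by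
      refine lt_of_le_of_lt hle ?_
      exact_mod_cast lt_add_of_pos_right T (del_pos n)
    rw [lifetime] at hlt
    rw [iInf_lt_iff] at hlt
    obtain ⟨u, hu⟩ := hlt
    rw [iInf_lt_iff] at hu
    obtain ⟨hXu, hu⟩ := hu
    have hule : u ≤ T + del n := le_of_lt (by exact_mod_cast hu)
    exact hX_absorb ω u (T + del n) hule hXu
  · intro hall
    refine ENNReal.le_of_forall_pos_le_add fun ε hε _ => ?_
    obtain ⟨n, hn⟩ := exists_del_le hε
    calc lifetime Δ X ω ≤ ((T + del n : ℝ≥0) : ℝ≥0∞) := lifetime_le (hall n)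
      _ ≤ (T : ℝ≥0∞) + ε := by
          rw [ENNReal.coe_add]
          exact add_le_add_right (ENNReal.coe_le_coe.2 hn) _

lemma measurableSet_lt_lifetime [MeasurableSingletonClass S]
    (hX_absorb : ∀ (ω : Ω) (s t : ℝ≥0), s ≤ t → X s ω = Δ → X t ω = Δ) (T : ℝ≥0) :
    MeasurableSet[F0inf X] {ω | (T : ℝ≥0∞) < lifetime Δ X ω} := by
  have : {ω | (T : ℝ≥0∞) < lifetime Δ X ω} = (⋂ n : ℕ, X (T + del n) ⁻¹' {Δ})ᶜ := by
    ext ω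
    simp only [Set.mem_setOf_eq, Set.mem_compl_iff, Set.mem_iInter, Set.mem_preimage,
      Set.mem_singleton_iff, ← lifetime_le_iff hX_absorb T ω, not_le]
  rw [this]
  exact (MeasurableSet.iInter fun n =>
    (measurable_X_inf (X := X) (T + del n)) (measurableSet_singleton Δ)).compl

lemma lt_lifetime_iff_exists {t : ℝ≥0} {ω : Ω} :
    (t : ℝ≥0∞) < lifetime Δ X ω ↔ ∃ n : ℕ, ((t + del n : ℝ≥0) : ℝ≥0∞) < lifetime Δ X ω := by
  constructor
  · intro h
    obtain ⟨r, hr1, hr2⟩ := ENNReal.lt_iff_exists_nnreal_btwn.1 h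
    have htr : t < r := by exact_mod_cast hr1
    obtain ⟨n, hn⟩ := exists_del_le (tsub_pos_of_lt htr)
    refine ⟨n, lt_of_le_of_lt ?_ hr2⟩
    have : t + del n ≤ r := by
      calc t + del n ≤ t + (r - t) := add_le_add_right hn t
        _ = r := add_tsub_cancel_of_le (le_of_lt htr)
    exact_mod_cast this
  · rintro ⟨n, hn⟩
    refine lt_of_le_of_lt ?_ hn
    exact_mod_cast le_add_of_nonneg_right (zero_le)

lemma lt_lifetime_mono {t T : ℝ≥0} {ω : Ω} (h : t ≤ T)
    (hT : (T : ℝ≥0∞) < lifetime Δ X ω) : (t : ℝ≥0∞) < lifetime Δ X ω :=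
  lt_of_le_of_lt (by exact_mod_cast h) hT

end Aux2

section Aux3
set_option linter.unusedSectionVars false

variable {S : Type*} [MeasurableSpace S] {Ω : Type*} {X : ℝ≥0 → Ω → S}
  {θ : ℝ≥0 → Ω → Ω} {P : S → @Measure Ω (F0inf X)}

lemma P_measurable (hP_meas : ∀ Λ : Set Ω, MeasurableSet[F0inf X] Λ → Measurable fun x => P x Λ) :
    @Measurable S (@Measure Ω (F0inf X)) _ (@Measure.instMeasurableSpace Ω (F0inf X)) P :=
  @Measure.measurable_of_measurable_coe Ω S (F0inf X) _ P fun s hs => hP_meas s hs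

/-- Function form of the Markov property at a fixed time, conditioned on `F⁰_{t+}`. -/
lemma markov_fun
    (hP_meas : ∀ Λ : Set Ω, MeasurableSet[F0inf X] Λ → Measurable fun x => P x Λ)
    (hshift : ∀ (s t : ℝ≥0) (ω : Ω), X t (θ s ω) = X (t + s) ω)
    (hMarkov : ∀ (s : ℝ≥0) (x : S) (Y : Ω → ℝ≥0∞), Measurable[F0inf X] Y →
      ∀ Λ : Set Ω, MeasurableSet[F0plus X s] Λ →
        ∫⁻ ω in Λ, Y (θ s ω) ∂(P x) = ∫⁻ ω in Λ, (∫⁻ ω', Y ω' ∂(P (X s ω))) ∂(P x))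
    (t : ℝ≥0) (x : S) {W Y : Ω → ℝ≥0∞}
    (hW : Measurable[F0plus X t] W) (hY : Measurable[F0inf X] Y) :
    ∫⁻ ω, Y (θ t ω) * W ω ∂(P x)
      = ∫⁻ ω, (∫⁻ y, Y y ∂(P (X t ω))) * W ω ∂(P x) := by
  have hplus : F0plus X t ≤ F0inf X := F0plus_le_F0inf X t
  have hθ := theta_measurable hshift t
  have hYθ : Measurable[F0inf X] fun ω => Y (θ t ω) := hY.comp hθ
  have hg : Measurable[F0inf X] fun ω => ∫⁻ y, Y y ∂(P (X t ω)) :=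
    (@Measure.measurable_lintegral Ω (F0inf X) Y hY).comp
      ((P_measurable hP_meas).comp (measurable_X_inf t))
  have hW' : Measurable[F0inf X] W := hW.mono hplus le_rfl
  have htrim : ((P x).withDensity fun ω => Y (θ t ω)).trim hplus
      = ((P x).withDensity fun ω => ∫⁻ y, Y y ∂(P (X t ω))).trim hplus := by
    refine @Measure.ext Ω (F0plus X t) _ _ fun A hA => ?_
    rw [trim_measurableSet_eq hplus hA, trim_measurableSet_eq hplus hA,
      withDensity_apply _ (hplus A hA), withDensity_apply _ (hplus A hA)]
    exact hMarkov t x Y hY A hA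
  calc ∫⁻ ω, Y (θ t ω) * W ω ∂(P x)
      = ∫⁻ ω, W ω ∂((P x).withDensity fun ω => Y (θ t ω)) :=
        (lintegral_withDensity_eq_lintegral_mul _ hYθ hW').symm
    _ = ∫⁻ ω, W ω ∂(((P x).withDensity fun ω => Y (θ t ω)).trim hplus) :=
        (lintegral_trim hplus hW).symm
    _ = ∫⁻ ω, W ω ∂(((P x).withDensity fun ω => ∫⁻ y, Y y ∂(P (X t ω))).trim hplus) := by
        rw [htrim]
    _ = ∫⁻ ω, W ω ∂((P x).withDensity fun ω => ∫⁻ y, Y y ∂(P (X t ω))) :=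
        lintegral_trim hplus hW
    _ = ∫⁻ ω, (∫⁻ y, Y y ∂(P (X t ω))) * W ω ∂(P x) :=
        lintegral_withDensity_eq_lintegral_mul _ hg hW'

lemma markov_fun_bind
    (hP_meas : ∀ Λ : Set Ω, MeasurableSet[F0inf X] Λ → Measurable fun x => P x Λ)
    (hshift : ∀ (s t : ℝ≥0) (ω : Ω), X t (θ s ω) = X (t + s) ω)
    (hMarkov : ∀ (s : ℝ≥0) (x : S) (Y : Ω → ℝ≥0∞), Measurable[F0inf X] Y →
      ∀ Λ : Set Ω, MeasurableSet[F0plus X s] Λ →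
        ∫⁻ ω in Λ, Y (θ s ω) ∂(P x) = ∫⁻ ω in Λ, (∫⁻ ω', Y ω' ∂(P (X s ω))) ∂(P x))
    (μ : Measure S) (t : ℝ≥0) {W Y : Ω → ℝ≥0∞}
    (hW : Measurable[F0plus X t] W) (hY : Measurable[F0inf X] Y) :
    ∫⁻ ω, Y (θ t ω) * W ω ∂(@Measure.bind S Ω _ (F0inf X) μ P)
      = ∫⁻ ω, (∫⁻ y, Y y ∂(P (X t ω))) * W ω ∂(@Measure.bind S Ω _ (F0inf X) μ P) := by
  have hplus : F0plus X t ≤ F0inf X := F0plus_le_F0inf X t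
  have hθ := theta_measurable hshift t
  have hYθ : Measurable[F0inf X] fun ω => Y (θ t ω) := hY.comp hθ
  have hg : Measurable[F0inf X] fun ω => ∫⁻ y, Y y ∂(P (X t ω)) :=
    (@Measure.measurable_lintegral Ω (F0inf X) Y hY).comp
      ((P_measurable hP_meas).comp (measurable_X_inf t))
  have hW' : Measurable[F0inf X] W := hW.mono hplus le_rfl
  letI : MeasurableSpace Ω := F0inf X
  rw [Measure.lintegral_bind (f := fun ω => Y (θ t ω) * W ω) (P_measurable hP_meas).aemeasurable (hYθ.mul hW').aemeasurable,
    Measure.lintegral_bind (f := fun ω => (∫⁻ y, Y y ∂(P (X t ω))) * W ω) (P_measurable hP_meas).aemeasurable (hg.mul hW').aemeasurable]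
  exact lintegral_congr fun x => markov_fun hP_meas hshift hMarkov t x hW hY

end Aux3

section Aux4
set_option linter.unusedSectionVars false
set_option maxHeartbeats 1000000

lemma measurable_indicator_one'' {Ω : Type*} {m : MeasurableSpace Ω} {s : Set Ω}
    (hs : MeasurableSet[m] s) : Measurable[m] (s.indicator (1 : Ω → ℝ≥0∞)) :=
  measurable_one.indicator hs

variable {S : Type*} [MeasurableSpace S] {Ω : Type*} {X : ℝ≥0 → Ω → S}
  {θ : ℝ≥0 → Ω → Ω} {P : S → @Measure Ω (F0inf X)}

/-- Blumenthal-type zero-one consequence of the Markov property for `F⁰_{t+}`: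
every `F⁰_{t+}`-measurable set agrees with an `F⁰_t`-measurable set up to a
`P_μ`-null set. -/
lemma blumenthal
    (hP_meas : ∀ Λ : Set Ω, MeasurableSet[F0inf X] Λ → Measurable fun x => P x Λ)
    (hP_prob : ∀ x : S, IsProbabilityMeasure (P x))
    (hshift : ∀ (s t : ℝ≥0) (ω : Ω), X t (θ s ω) = X (t + s) ω)
    (hMarkov : ∀ (s : ℝ≥0) (x : S) (Y : Ω → ℝ≥0∞), Measurable[F0inf X] Y →
      ∀ Λ : Set Ω, MeasurableSet[F0plus X s] Λ →
        ∫⁻ ω in Λ, Y (θ s ω) ∂(P x) = ∫⁻ ω in Λ, (∫⁻ ω', Y ω' ∂(P (X s ω))) ∂(P x))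
    (μ : Measure S) [IsProbabilityMeasure μ] (t : ℝ≥0) {Λ : Set Ω}
    (hΛ : MeasurableSet[F0plus X t] Λ) :
    ∃ Λ' : Set Ω, MeasurableSet[F0 X t] Λ'
      ∧ @Measure.bind S Ω _ (F0inf X) μ P (symmDiff Λ Λ') = 0 := by
  letI : MeasurableSpace Ω := F0inf X
  set Pm : Measure Ω := μ.bind P with hPmdef
  have hPmeas := P_measurable hP_meas
  have hm : F0 X t ≤ F0inf X := F0_le_F0inf X t
  have hplus : F0plus X t ≤ F0inf X := F0plus_le_F0inf X t
  have hmplus : F0 X t ≤ F0plus X t := F0_le_F0plus X t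
  have hθ := theta_measurable hshift t
  have hΛinf : MeasurableSet Λ := hplus Λ hΛ
  haveI : IsProbabilityMeasure Pm := by
    constructor
    rw [hPmdef, Measure.bind_apply MeasurableSet.univ hPmeas.aemeasurable]
    have h1 : ∀ x, P x Set.univ = 1 := fun x => (hP_prob x).measure_univ
    simp [h1]
  set ν : @Measure Ω (F0 X t) := (Pm.restrict Λ).trim hm with hν
  set ρ : @Measure Ω (F0 X t) := Pm.trim hm with hρ
  have hac : ν ≪ ρ := by
    refine Measure.AbsolutelyContinuous.mk fun A hA h0 => ?_
    rw [hρ, trim_measurableSet_eq hm hA] at h0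
    rw [hν, trim_measurableSet_eq hm hA, Measure.restrict_apply (hm A hA)]
    exact measure_mono_null Set.inter_subset_left h0
  set Ψ : Ω → ℝ≥0∞ := ν.rnDeriv ρ with hΨdef
  have hΨm : Measurable[F0 X t] Ψ := Measure.measurable_rnDeriv ν ρ
  have hΨinf : Measurable Ψ := hΨm.mono hm le_rfl
  have key1 : ∀ A : Set Ω, MeasurableSet[F0 X t] A →
      ∫⁻ ω in A, Ψ ω ∂Pm = Pm (Λ ∩ A) := by
    intro A hA
    have h1 : ∫⁻ ω in A, Ψ ω ∂Pm = ∫⁻ ω in A, Ψ ω ∂ρ := by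
      rw [← lintegral_indicator (hm A hA), ← @lintegral_indicator Ω (F0 X t) ρ A hA,
        hρ, lintegral_trim hm (hΨm.indicator hA)]
    have h2 : ∫⁻ ω in A, Ψ ω ∂ρ = ν A := Measure.setLIntegral_rnDeriv' hac hA
    have h3 : ν A = Pm (Λ ∩ A) := by
      rw [hν, trim_measurableSet_eq hm hA, Measure.restrict_apply (hm A hA), Set.inter_comm]
    exact h1.trans (h2.trans h3)
  have hΨint : ∫⁻ ω, Ψ ω ∂Pm ≠ ∞ := by
    have h1 := key1 Set.univ MeasurableSet.univ
    rw [setLIntegral_univ] at h1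
    rw [h1]
    exact measure_ne_top Pm _
  set ν₂ : Measure Ω := Pm.withDensity Ψ with hν₂def
  haveI : IsFiniteMeasure ν₂ := isFiniteMeasure_withDensity hΨint
  have hν₂trim : ν₂.trim hm = ν := by
    refine @Measure.ext Ω (F0 X t) _ _ fun A hA => ?_
    rw [trim_measurableSet_eq hm hA, hν, trim_measurableSet_eq hm hA,
      hν₂def, withDensity_apply _ (hm A hA), key1 A hA,
      Measure.restrict_apply (hm A hA), Set.inter_comm]
  have hrestrict_eq : ∀ u : Ω → ℝ≥0∞, Measurable[F0 X t] u →
      ∫⁻ ω in Λ, u ω ∂Pm = ∫⁻ ω, Ψ ω * u ω ∂Pm := by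
    intro u hu
    have h1 : ∫⁻ ω in Λ, u ω ∂Pm = ∫⁻ ω, u ω ∂((Pm.restrict Λ).trim hm) :=
      (lintegral_trim hm hu).symm
    have h2 : ∫⁻ ω, u ω ∂(ν₂.trim hm) = ∫⁻ ω, u ω ∂ν₂ := lintegral_trim hm hu
    rw [h1, ← hν, ← hν₂trim, h2, hν₂def,
      lintegral_withDensity_eq_lintegral_mul _ hΨinf (hu.mono hm le_rfl)]
    rfl
  -- the π-system of sets A ∩ θ_t⁻¹ B
  set C : Set (Set Ω) :=
    {s | ∃ A B : Set Ω, MeasurableSet[F0 X t] A ∧ MeasurableSet B ∧ s = A ∩ θ t ⁻¹' B} with hC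
  have hpi : IsPiSystem C := by
    rintro s1 ⟨A1, B1, hA1, hB1, rfl⟩ s2 ⟨A2, B2, hA2, hB2, rfl⟩ -
    refine ⟨A1 ∩ A2, B1 ∩ B2, hA1.inter hA2, hB1.inter hB2, ?_⟩
    rw [Set.preimage_inter]
    ext ω
    simp only [Set.mem_inter_iff, Set.mem_preimage]
    tauto
  have hgen : (F0inf X) = MeasurableSpace.generateFrom C := by
    refine le_antisymm ?_ (MeasurableSpace.generateFrom_le ?_)
    · rw [F0inf]
      refine iSup_le fun s => ?_
      rw [← measurable_iff_comap_le]
      intro E hE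
      by_cases hst : s ≤ t
      · refine MeasurableSpace.measurableSet_generateFrom
          ⟨X s ⁻¹' E, Set.univ, measurable_X_F0 hst hE, MeasurableSet.univ, by simp⟩
      · push_neg at hst
        refine MeasurableSpace.measurableSet_generateFrom
          ⟨Set.univ, X (s - t) ⁻¹' E, MeasurableSet.univ, measurable_X_inf (s - t) hE, ?_⟩
        ext ω
        simp only [Set.univ_inter, Set.mem_preimage]
        rw [hshift t (s - t) ω, tsub_add_cancel_of_le (le_of_lt hst)]
    · rintro s ⟨A, B, hA, hB, rfl⟩
      exact (hm A hA).inter (hθ hB)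
  have hν₁ν₂ : Pm.restrict Λ = ν₂ := by
    refine ext_of_generate_finite C hgen hpi ?_ ?_
    · rintro s ⟨A, B, hA, hB, rfl⟩
      have hsm : MeasurableSet (A ∩ θ t ⁻¹' B) := (hm A hA).inter (hθ hB)
      have hWm : Measurable[F0plus X t] ((Λ ∩ A).indicator (1 : Ω → ℝ≥0∞)) :=
        measurable_indicator_one'' (hΛ.inter (hmplus A hA))
      have hW2 : Measurable[F0plus X t] (fun ω => Ψ ω * A.indicator 1 ω) :=
        (hΨm.mono hmplus le_rfl).mul
          ((measurable_indicator_one'' hA).mono hmplus le_rfl)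
      have hYm : Measurable (B.indicator (1 : Ω → ℝ≥0∞)) := measurable_one.indicator hB
      have hgB : ∀ ω : Ω, (∫⁻ y, B.indicator 1 y ∂(P (X t ω))) = P (X t ω) B := fun ω =>
        lintegral_indicator_one hB
      have e1 : Pm.restrict Λ (A ∩ θ t ⁻¹' B)
          = ∫⁻ ω, B.indicator 1 (θ t ω) * (Λ ∩ A).indicator 1 ω ∂Pm := by
        rw [Measure.restrict_apply hsm]
        have hsm2 : MeasurableSet ((Λ ∩ A) ∩ θ t ⁻¹' B) :=
          (hΛinf.inter (hm A hA)).inter (hθ hB)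
        have hset : A ∩ θ t ⁻¹' B ∩ Λ = (Λ ∩ A) ∩ θ t ⁻¹' B := by
          ext ω; simp only [Set.mem_inter_iff, Set.mem_preimage]; tauto
        rw [hset, ← lintegral_indicator_one hsm2]
        refine lintegral_congr fun ω => ?_
        by_cases h1 : ω ∈ Λ <;> by_cases h2 : ω ∈ A <;> by_cases h3 : θ t ω ∈ B <;>
          simp [Set.indicator_apply, h1, h2, h3]
      have e2 : ∫⁻ ω, B.indicator 1 (θ t ω) * (Λ ∩ A).indicator 1 ω ∂Pm
          = ∫⁻ ω, P (X t ω) B * (Λ ∩ A).indicator 1 ω ∂Pm :=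
        (markov_fun_bind hP_meas hshift hMarkov μ t hWm hYm).trans
          (lintegral_congr fun ω => by rw [hgB ω])
      have e3 : ∫⁻ ω, P (X t ω) B * (Λ ∩ A).indicator 1 ω ∂Pm
          = ∫⁻ ω in Λ, P (X t ω) B * A.indicator 1 ω ∂Pm := by
        rw [← lintegral_indicator hΛinf]
        refine lintegral_congr fun ω => ?_
        by_cases h1 : ω ∈ Λ <;> by_cases h2 : ω ∈ A <;>
          simp [Set.indicator_apply, h1, h2]
      have hum : Measurable[F0 X t] fun ω => P (X t ω) B * A.indicator 1 ω :=
        ((Measure.measurable_coe hB).comp (hPmeas.comp (measurable_X_F0 le_rfl))).mul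
          (measurable_indicator_one'' hA)
      have e4 := hrestrict_eq _ hum
      have e5 : ∫⁻ ω, Ψ ω * (P (X t ω) B * A.indicator 1 ω) ∂Pm
          = ∫⁻ ω, P (X t ω) B * (Ψ ω * A.indicator 1 ω) ∂Pm :=
        lintegral_congr fun ω => by ring
      have e6 : ∫⁻ ω, P (X t ω) B * (Ψ ω * A.indicator 1 ω) ∂Pm
          = ∫⁻ ω, B.indicator 1 (θ t ω) * (Ψ ω * A.indicator 1 ω) ∂Pm := by
        refine ((markov_fun_bind hP_meas hshift hMarkov μ t hW2 hYm).trans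
          (lintegral_congr fun ω => by rw [hgB ω])).symm
      have e7 : ∫⁻ ω, B.indicator 1 (θ t ω) * (Ψ ω * A.indicator 1 ω) ∂Pm
          = ν₂ (A ∩ θ t ⁻¹' B) := by
        rw [hν₂def, withDensity_apply _ hsm, ← lintegral_indicator hsm]
        refine lintegral_congr fun ω => ?_
        by_cases h2 : ω ∈ A <;> by_cases h3 : θ t ω ∈ B <;>
          simp [Set.indicator_apply, h2, h3]
      rw [e1, e2, e3, e4, e5, e6, e7]
    · rw [Measure.restrict_apply MeasurableSet.univ, Set.univ_inter, hν₂def,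
        withDensity_apply _ MeasurableSet.univ, setLIntegral_univ]
      have h1 := key1 Set.univ MeasurableSet.univ
      rw [setLIntegral_univ, Set.inter_univ] at h1
      exact h1.symm
  have key5 : ∀ A : Set Ω, MeasurableSet A → Pm (Λ ∩ A) = ∫⁻ ω in A, Ψ ω ∂Pm := by
    intro A hA
    rw [← withDensity_apply _ hA, ← hν₂def, ← hν₁ν₂, Measure.restrict_apply hA, Set.inter_comm]
  refine ⟨{ω | 1 ≤ Ψ ω}, hΨm measurableSet_Ici, ?_⟩
  · have hΛ'inf : MeasurableSet {ω | 1 ≤ Ψ ω} := hΨinf measurableSet_Ici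
    have part1 : Pm ({ω | 1 ≤ Ψ ω} \ Λ) = 0 := by
      have h0 : ∫⁻ ω in Λᶜ, Ψ ω ∂Pm = 0 := by
        rw [← key5 _ hΛinf.compl, Set.inter_compl_self, measure_empty]
      have hae := (setLIntegral_eq_zero_iff hΛinf.compl hΨinf).1 h0
      have hsub : {ω | 1 ≤ Ψ ω} \ Λ ⊆ {ω | ¬ Ψ ω = 0} := by
        intro ω hω
        have : (1 : ℝ≥0∞) ≤ Ψ ω := hω.1
        simp only [Set.mem_setOf_eq]
        intro h
        rw [h] at this
        exact absurd this (by simp)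
      have hnull : Pm {x | ¬ (x ∈ Λᶜ → Ψ x = 0)} = 0 := ae_iff.mp hae
      refine measure_mono_null ?_ hnull
      intro ω hω
      simp only [Set.mem_setOf_eq, Classical.not_imp]
      refine ⟨hω.2, fun h => ?_⟩
      have h1 : (1 : ℝ≥0∞) ≤ Ψ ω := hω.1
      rw [h] at h1
      exact absurd h1 (by simp)
    have part2 : Pm (Λ \ {ω | 1 ≤ Ψ ω}) = 0 := by
      set A : Set Ω := Λ \ {ω | 1 ≤ Ψ ω} with hA
      have hAm : MeasurableSet A := hΛinf.diff hΛ'inf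
      have hc : ∫⁻ ω in A, Ψ ω ∂Pm = Pm A := by
        rw [← key5 _ hAm, Set.inter_eq_self_of_subset_right Set.diff_subset]
      have hlt : ∀ ω ∈ A, Ψ ω < 1 := fun ω hω => lt_of_not_ge hω.2
      have hsub : ∫⁻ ω in A, (1 - Ψ ω) ∂Pm = ∫⁻ ω in A, 1 ∂Pm - ∫⁻ ω in A, Ψ ω ∂Pm := by
        refine lintegral_sub hΨinf (by rw [hc]; exact measure_ne_top Pm A) ?_
        filter_upwards [ae_restrict_mem hAm] with ω hω
        exact (hlt ω hω).le
      have hone : ∫⁻ ω in A, (1 : ℝ≥0∞) ∂Pm = Pm A := by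
        rw [setLIntegral_one]
      have hz : ∫⁻ ω in A, (1 - Ψ ω) ∂Pm = 0 := by
        rw [hsub, hone, hc, tsub_self]
      have hae := (setLIntegral_eq_zero_iff hAm (measurable_const.sub hΨinf)).1 hz
      have hnull : Pm {x | ¬ (x ∈ A → 1 - Ψ x = 0)} = 0 := ae_iff.mp hae
      refine measure_mono_null ?_ hnull
      intro ω hω
      simp only [Set.mem_setOf_eq, Classical.not_imp]
      have hpos : (0 : ℝ≥0∞) < 1 - Ψ ω := tsub_pos_of_lt (hlt ω hω)
      exact ⟨hω, hpos.ne'⟩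
    rw [Set.symmDiff_def]
    exact measure_union_null part2 part1
end Aux4

section Aux5
set_option linter.unusedSectionVars false
set_option maxHeartbeats 1000000

open MeasureTheory Set Filter
open scoped NNReal ENNReal

variable {S : Type*} [MeasurableSpace S] {Ω : Type*} {X : ℝ≥0 → Ω → S}
  {P : S → @Measure Ω (F0inf X)} {Δ : S} {h : S → ℝ≥0∞} {α : ℝ}

lemma Qmu_eq_zero_iff [MeasurableSingletonClass S]
    (h_meas : Measurable h)
    (h_pos : ∀ x : S, x ≠ Δ → 0 < h x ∧ h x < ∞)
    (hX_absorb : ∀ (ω : Ω) (s t : ℝ≥0), s ≤ t → X s ω = Δ → X t ω = Δ)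
    (hP_meas : ∀ Λ : Set Ω, MeasurableSet[F0inf X] Λ → Measurable fun x => P x Λ)
    (hP_prob : ∀ x : S, IsProbabilityMeasure (P x))
    (hP_start : ∀ x : S, P x {ω | X 0 ω = x} = 1)
    (μ : Measure S) {Γ : Set Ω} (hΓ : MeasurableSet[F0inf X] Γ) (T : ℝ≥0) :
    Qmu Δ α h X P μ T Γ = 0
      ↔ @Measure.bind S Ω _ (F0inf X) μ P
          (Γ ∩ {ω | (T : ℝ≥0∞) < lifetime Δ X ω}) = 0 := by
  letI : MeasurableSpace Ω := F0inf X
  have hPmeas := P_measurable hP_meas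
  set Z : Set Ω := {ω | (T : ℝ≥0∞) < lifetime Δ X ω} with hZdef
  have hZ : MeasurableSet Z := measurableSet_lt_lifetime hX_absorb T
  set c : ℝ≥0∞ := ENNReal.ofReal (Real.exp (α * (T : ℝ))) with hcdef
  have hc0 : c ≠ 0 := (ENNReal.ofReal_pos.2 (Real.exp_pos _)).ne'
  set f : Ω → ℝ≥0∞ := fun ω => c * Γ.indicator 1 ω * (h (X T ω))⁻¹ with hfdef
  have hfm : Measurable f :=
    (measurable_const.mul (measurable_indicator_one'' hΓ)).mul
      ((h_meas.comp (measurable_X_inf T)).inv)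
  have hQbar : ∀ x : S, QbarSet Δ α h X P x T Γ = h x * ∫⁻ ω in Z, f ω ∂(P x) := by
    intro x; rfl
  have hpoint : ∀ x : S, (QbarSet Δ α h X P x T Γ = 0 ↔ P x (Γ ∩ Z) = 0) := by
    intro x
    by_cases hx : x = Δ
    · haveI := hP_prob x
      have hms : MeasurableSet {ω | X 0 ω = x} :=
        measurable_X_inf (X := X) 0 (measurableSet_singleton x)
      have hcompl : P x ({ω | X 0 ω = x}ᶜ) = 0 := by
        rw [measure_compl hms (measure_ne_top _ _), hP_start x, measure_univ, tsub_self]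
      have hss : Z ⊆ {ω | X 0 ω = x}ᶜ := by
        intro ω hω hctr
        have hctr' : X 0 ω = Δ := hx ▸ hctr
        have h1 : lifetime Δ X ω ≤ ((0 : ℝ≥0) : ℝ≥0∞) := lifetime_le hctr'
        have h2 : (T : ℝ≥0∞) < lifetime Δ X ω := hω
        have h3 : (T : ℝ≥0∞) < ((0 : ℝ≥0) : ℝ≥0∞) := lt_of_lt_of_le h2 h1
        simp at h3
      have hZ0 : P x Z = 0 := measure_mono_null hss hcompl
      constructor
      · intro _
        exact measure_mono_null (fun ω hω => hss hω.2) hcompl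
      · intro _
        rw [hQbar, Measure.restrict_eq_zero.2 hZ0, lintegral_zero_measure, mul_zero]
    · have hx0 : h x ≠ 0 := (h_pos x hx).1.ne'
      rw [hQbar]
      rw [mul_eq_zero]
      have hset : {ω | ¬ (ω ∈ Z → f ω = 0)} = Γ ∩ Z := by
        ext ω
        simp only [Set.mem_setOf_eq, Classical.not_imp, Set.mem_inter_iff]
        constructor
        · rintro ⟨hωZ, hfω⟩
          refine ⟨?_, hωZ⟩
          by_contra hωΓ
          exact hfω (by simp [hfdef, Set.indicator_apply, hωΓ])
        · rintro ⟨hωΓ, hωZ⟩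
          refine ⟨hωZ, ?_⟩
          have hne : X T ω ≠ Δ := X_ne_of_lt_lifetime hωZ
          have hinv : (h (X T ω))⁻¹ ≠ 0 := ENNReal.inv_ne_zero.2 (h_pos _ hne).2.ne
          simp only [hfdef, Set.indicator_apply, hωΓ, if_pos, Pi.one_apply, mul_one]
          exact mul_ne_zero (mul_ne_zero hc0 (by simp [hωΓ])) hinv
      constructor
      · rintro (hh | hint)
        · exact absurd hh hx0
        · have hae := (setLIntegral_eq_zero_iff hZ hfm).1 hint
          have hnull : P x {ω | ¬ (ω ∈ Z → f ω = 0)} = 0 := ae_iff.mp hae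
          rw [hset] at hnull
          exact hnull
      · intro hnull
        right
        refine (setLIntegral_eq_zero_iff hZ hfm).2 ?_
        rw [ae_iff, hset]
        exact hnull
  have hqm : Measurable fun x => QbarSet Δ α h X P x T Γ := by
    have : (fun x => QbarSet Δ α h X P x T Γ)
        = fun x => h x * ∫⁻ ω, Z.indicator f ω ∂(P x) := by
      funext x
      rw [hQbar, lintegral_indicator hZ]
    rw [this]
    exact h_meas.mul ((Measure.measurable_lintegral (hfm.indicator hZ)).comp hPmeas)
  have hpm : Measurable fun x => P x (Γ ∩ Z) :=
    (Measure.measurable_coe (hΓ.inter hZ)).comp hPmeas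
  rw [Qmu, Measure.bind_apply (hΓ.inter hZ) hPmeas.aemeasurable,
    lintegral_eq_zero_iff hqm, lintegral_eq_zero_iff hpm]
  constructor
  · intro hq
    filter_upwards [hq] with x hx
    exact (hpoint x).1 hx
  · intro hq
    filter_upwards [hq] with x hx
    exact (hpoint x).2 hx

lemma Qmu_forall_zero_iff [MeasurableSingletonClass S]
    (h_meas : Measurable h)
    (h_pos : ∀ x : S, x ≠ Δ → 0 < h x ∧ h x < ∞)
    (hX_absorb : ∀ (ω : Ω) (s t : ℝ≥0), s ≤ t → X s ω = Δ → X t ω = Δ)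
    (hP_meas : ∀ Λ : Set Ω, MeasurableSet[F0inf X] Λ → Measurable fun x => P x Λ)
    (hP_prob : ∀ x : S, IsProbabilityMeasure (P x))
    (hP_start : ∀ x : S, P x {ω | X 0 ω = x} = 1)
    (μ : Measure S) {Γ : Set Ω} (hΓ : MeasurableSet[F0inf X] Γ) (t : ℝ≥0) :
    (∀ T : ℝ≥0, t < T → Qmu Δ α h X P μ T Γ = 0)
      ↔ @Measure.bind S Ω _ (F0inf X) μ P
          (Γ ∩ {ω | (t : ℝ≥0∞) < lifetime Δ X ω}) = 0 := by
  letI : MeasurableSpace Ω := F0inf X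
  constructor
  · intro hall
    have hsplit : Γ ∩ {ω | (t : ℝ≥0∞) < lifetime Δ X ω}
        = ⋃ n : ℕ, Γ ∩ {ω | ((t + del n : ℝ≥0) : ℝ≥0∞) < lifetime Δ X ω} := by
      ext ω
      simp only [Set.mem_inter_iff, Set.mem_iUnion, Set.mem_setOf_eq]
      constructor
      · rintro ⟨hΓω, hζ⟩
        obtain ⟨n, hn⟩ := lt_lifetime_iff_exists.1 hζ
        exact ⟨n, hΓω, hn⟩
      · rintro ⟨n, hΓω, hn⟩
        exact ⟨hΓω, lt_lifetime_iff_exists.2 ⟨n, hn⟩⟩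
    rw [hsplit]
    refine measure_iUnion_null fun n => ?_
    have ht : t < t + del n := lt_add_of_pos_right t (del_pos n)
    exact (Qmu_eq_zero_iff h_meas h_pos hX_absorb hP_meas hP_prob hP_start μ hΓ
      (t + del n)).1 (hall _ ht)
  · intro hnull T hT
    refine (Qmu_eq_zero_iff h_meas h_pos hX_absorb hP_meas hP_prob hP_start μ hΓ T).2 ?_
    refine measure_mono_null ?_ hnull
    exact Set.inter_subset_inter_right Γ fun ω hω => lt_lifetime_mono (le_of_lt hT) hω

end Aux5

section Aux6
set_option linter.unusedSectionVars false
set_option maxHeartbeats 1000000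

open MeasureTheory Set Filter
open scoped NNReal ENNReal

variable {S : Type*} [MeasurableSpace S] {Ω : Type*} {X : ℝ≥0 → Ω → S}
  {θ : ℝ≥0 → Ω → Ω} {P : S → @Measure Ω (F0inf X)} {Δ : S} {h : S → ℝ≥0∞} {α : ℝ}

lemma iInter_iUnion_measurable {A : ℕ → Set Ω} {t : ℝ≥0}
    (hA : ∀ u : ℝ≥0, t < u → ∃ N : ℕ, ∀ n, N ≤ n → MeasurableSet[F0 X u] (A n)) :
    MeasurableSet[F0plus X t] (⋂ N : ℕ, ⋃ n : ℕ, A (n + N)) := by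
  unfold F0plus
  refine MeasurableSpace.measurableSet_iInf.2 fun u => ?_
  refine MeasurableSpace.measurableSet_iInf.2 fun hu => ?_
  obtain ⟨N₀, hN₀⟩ := hA u hu
  set D : ℕ → Set Ω := fun N => ⋃ n : ℕ, A (n + N) with hD
  have hDanti : ∀ a b : ℕ, a ≤ b → D b ⊆ D a := by
    intro a b hab ω hω
    obtain ⟨n, hn⟩ := Set.mem_iUnion.1 hω
    exact Set.mem_iUnion.2 ⟨n + (b - a), by rwa [show n + (b - a) + a = n + b by omega]⟩
  have hset : (⋂ N : ℕ, D N) = ⋂ N : ℕ, D (N + N₀) := by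
    refine Set.Subset.antisymm ?_ ?_
    · intro ω hω
      exact Set.mem_iInter.2 fun N => Set.mem_iInter.1 hω (N + N₀)
    · intro ω hω
      exact Set.mem_iInter.2 fun N =>
        hDanti N (N + N₀) (Nat.le_add_right N N₀) (Set.mem_iInter.1 hω N)
  rw [show (⋂ N : ℕ, ⋃ n : ℕ, A (n + N)) = ⋂ N : ℕ, D N from rfl, hset]
  exact MeasurableSet.iInter fun N =>
    MeasurableSet.iUnion fun n => hN₀ (n + (N + N₀)) (by omega)

lemma Mmu_mono (μ : Measure S) {t s : ℝ≥0} (hts : t ≤ s) :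
    Mmu Δ α h X P μ t ⊆ Mmu Δ α h X P μ s := by
  rintro Λ ⟨Λ', Γ, h1, h2, h3, h4⟩
  exact ⟨Λ', Γ, F0_mono X hts _ h1, F0plus_mono X hts _ h2, h3,
    fun T hT => h4 T (lt_of_le_of_lt hts hT)⟩

lemma Mmu_right_continuous [MeasurableSingletonClass S]
    (h_meas : Measurable h)
    (h_pos : ∀ x : S, x ≠ Δ → 0 < h x ∧ h x < ∞)
    (hX_absorb : ∀ (ω : Ω) (s t : ℝ≥0), s ≤ t → X s ω = Δ → X t ω = Δ)
    (hshift : ∀ (s t : ℝ≥0) (ω : Ω), X t (θ s ω) = X (t + s) ω)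
    (hP_prob : ∀ x : S, IsProbabilityMeasure (P x))
    (hP_meas : ∀ Λ : Set Ω, MeasurableSet[F0inf X] Λ → Measurable fun x => P x Λ)
    (hP_start : ∀ x : S, P x {ω | X 0 ω = x} = 1)
    (hMarkov : ∀ (s : ℝ≥0) (x : S) (Y : Ω → ℝ≥0∞), Measurable[F0inf X] Y →
      ∀ Λ : Set Ω, MeasurableSet[F0plus X s] Λ →
        ∫⁻ ω in Λ, Y (θ s ω) ∂(P x) = ∫⁻ ω in Λ, (∫⁻ ω', Y ω' ∂(P (X s ω))) ∂(P x))
    (μ : Measure S) [IsProbabilityMeasure μ] (t : ℝ≥0) :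
    Mmu Δ α h X P μ t = {Λ : Set Ω | ∀ s : ℝ≥0, t < s → Λ ∈ Mmu Δ α h X P μ s} := by
  refine Set.Subset.antisymm (fun Λ hΛ s hs => Mmu_mono μ (le_of_lt hs) hΛ) ?_
  intro Λ hΛ
  simp only [Set.mem_setOf_eq] at hΛ
  set sn : ℕ → ℝ≥0 := fun n => t + del n with hsn
  have hsnt : ∀ n, t < sn n := fun n => lt_add_of_pos_right t (del_pos n)
  have hchoice : ∀ n : ℕ, ∃ Λ' Γ : Set Ω, MeasurableSet[F0 X (sn n)] Λ'
      ∧ MeasurableSet[F0plus X (sn n)] Γ ∧ symmDiff Λ Λ' ⊆ Γ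
      ∧ ∀ T : ℝ≥0, sn n < T → Qmu Δ α h X P μ T Γ = 0 :=
    fun n => hΛ (sn n) (hsnt n)
  choose Λ' Γ h1 h2 h3 h4 using hchoice
  have hΓinf : ∀ n, MeasurableSet[F0inf X] (Γ n) :=
    fun n => F0plus_le_F0inf X (sn n) _ (h2 n)
  have hΓnull : ∀ n, @Measure.bind S Ω _ (F0inf X) μ P
      (Γ n ∩ {ω | ((sn n : ℝ≥0) : ℝ≥0∞) < lifetime Δ X ω}) = 0 :=
    fun n => (Qmu_forall_zero_iff h_meas h_pos hX_absorb hP_meas hP_prob hP_start μ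
      (hΓinf n) (sn n)).1 (h4 n)
  set Λ₀ : Set Ω := ⋂ N : ℕ, ⋃ n : ℕ, Λ' (n + N) with hΛ₀def
  set Γ₀ : Set Ω := ⋂ N : ℕ, ⋃ n : ℕ, Γ (n + N) with hΓ₀def
  have hlt : ∀ u : ℝ≥0, t < u → ∃ N : ℕ, ∀ n, N ≤ n → sn n < u := by
    intro u hu
    have hut : 0 < u - t := tsub_pos_of_lt hu
    obtain ⟨N, hN⟩ := exists_del_le (half_pos hut)
    refine ⟨N, fun n hn => ?_⟩
    have h5 : del n ≤ (u - t) / 2 := (del_antitone hn).trans hN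
    have h6 : del n < u - t := lt_of_le_of_lt h5 (NNReal.half_lt_self hut.ne')
    calc sn n = t + del n := rfl
      _ < t + (u - t) := add_lt_add_right h6 t
      _ = u := add_tsub_cancel_of_le (le_of_lt hu)
  have hΛ₀m : MeasurableSet[F0plus X t] Λ₀ :=
    iInter_iUnion_measurable fun u hu => by
      obtain ⟨N, hN⟩ := hlt u hu
      exact ⟨N, fun n hn => F0_mono X (le_of_lt (hN n hn)) _ (h1 n)⟩
  have hΓ₀m : MeasurableSet[F0plus X t] Γ₀ :=
    iInter_iUnion_measurable fun u hu => by
      obtain ⟨N, hN⟩ := hlt u hu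
      exact ⟨N, fun n hn => F0plus_le X (hN n hn) _ (h2 n)⟩
  have hsym0 : symmDiff Λ Λ₀ ⊆ Γ₀ := by
    intro ω hω
    rw [Set.mem_symmDiff] at hω
    refine Set.mem_iInter.2 fun N => ?_
    rcases hω with ⟨hωΛ, hωn⟩ | ⟨hωΛ₀, hωn⟩
    · have hex : ∃ N₁ : ℕ, ∀ n : ℕ, ω ∉ Λ' (n + N₁) := by
        rw [hΛ₀def] at hωn
        simpa only [Set.mem_iInter, Set.mem_iUnion, not_forall, not_exists] using hωn
      obtain ⟨N₁, hN₁⟩ := hex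
      refine Set.mem_iUnion.2 ⟨N₁, ?_⟩
      have hnotin : ω ∉ Λ' (N₁ + N) := by
        have := hN₁ N
        rwa [Nat.add_comm] at this
      exact h3 (N₁ + N) (Set.mem_symmDiff.2 (Or.inl ⟨hωΛ, hnotin⟩))
    · have hN := Set.mem_iInter.1 hωΛ₀ N
      obtain ⟨n, hn⟩ := Set.mem_iUnion.1 hN
      exact Set.mem_iUnion.2 ⟨n, h3 (n + N) (Set.mem_symmDiff.2 (Or.inr ⟨hn, hωn⟩))⟩
  have hΓ₀null : @Measure.bind S Ω _ (F0inf X) μ P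
      (Γ₀ ∩ {ω | (t : ℝ≥0∞) < lifetime Δ X ω}) = 0 := by
    refine measure_mono_null (?_ :
      _ ⊆ ⋃ m : ℕ, ⋃ n : ℕ, (Γ (n + m) ∩ {ω | ((sn (n + m) : ℝ≥0) : ℝ≥0∞) < lifetime Δ X ω}))
      (measure_iUnion_null fun m => measure_iUnion_null fun n => hΓnull (n + m))
    rintro ω ⟨hωΓ₀, hωZ⟩
    obtain ⟨m, hm⟩ := lt_lifetime_iff_exists.1 hωZ
    obtain ⟨n, hn⟩ := Set.mem_iUnion.1 (Set.mem_iInter.1 hωΓ₀ m)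
    refine Set.mem_iUnion.2 ⟨m, Set.mem_iUnion.2 ⟨n, hn, ?_⟩⟩
    have hle : sn (n + m) ≤ sn m := add_le_add_right (del_antitone (Nat.le_add_left m n)) t
    exact lt_lifetime_mono hle hm
  obtain ⟨Λf, hΛf, hΛfnull⟩ := blumenthal hP_meas hP_prob hshift hMarkov μ t hΛ₀m
  have hΓf : MeasurableSet[F0plus X t] (Γ₀ ∪ symmDiff Λ₀ Λf) :=
    hΓ₀m.union (hΛ₀m.symmDiff (F0_le_F0plus X t _ hΛf))
  have hΓfinf : MeasurableSet[F0inf X] (Γ₀ ∪ symmDiff Λ₀ Λf) :=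
    F0plus_le_F0inf X t _ hΓf
  have hΓfnull : @Measure.bind S Ω _ (F0inf X) μ P
      ((Γ₀ ∪ symmDiff Λ₀ Λf) ∩ {ω | (t : ℝ≥0∞) < lifetime Δ X ω}) = 0 := by
    refine measure_mono_null (?_ :
      _ ⊆ (Γ₀ ∩ {ω | (t : ℝ≥0∞) < lifetime Δ X ω}) ∪ symmDiff Λ₀ Λf) ?_
    · rintro ω ⟨hω1 | hω1, hω2⟩
      · exact Or.inl ⟨hω1, hω2⟩
      · exact Or.inr hω1
    · exact measure_union_null hΓ₀null hΛfnull
  refine ⟨Λf, Γ₀ ∪ symmDiff Λ₀ Λf, hΛf, hΓf, ?_, ?_⟩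
  · intro ω hω
    have hc' : ω ∈ (symmDiff Λ Λ₀) ∪ (symmDiff Λ₀ Λf) :=
      symmDiff_triangle (a := Λ) (b := Λ₀) (c := Λf) hω
    rcases hc' with hc | hc
    · exact Or.inl (hsym0 hc)
    · exact Or.inr hc
  · exact (Qmu_forall_zero_iff h_meas h_pos hX_absorb hP_meas hP_prob hP_start μ
      hΓfinf t).2 hΓfnull

end Aux6


theorem filtration_M_right_continuous
    {S : Type*} [MeasurableSpace S] [TopologicalSpace S] [BorelSpace S]
    [StandardBorelSpace S] {Ω : Type*} (Δ : S)
    (X : ℝ≥0 → Ω → S) (θ : ℝ≥0 → Ω → Ω) (P : S → @Measure Ω (F0inf X))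
    (h : S → ℝ≥0∞) (α : ℝ) (hα : 0 < α)
    (h_meas : Measurable h) (h_cem : h Δ = 0)
    (h_pos : ∀ x : S, x ≠ Δ → 0 < h x ∧ h x < ∞)
    (hX_rc : ∀ (ω : Ω) (t : ℝ≥0),
      Filter.Tendsto (fun s => X s ω) (nhdsWithin t (Set.Ioi t)) (nhds (X t ω)))
    (hX_absorb : ∀ (ω : Ω) (s t : ℝ≥0), s ≤ t → X s ω = Δ → X t ω = Δ)
    (hshift : ∀ (s t : ℝ≥0) (ω : Ω), X t (θ s ω) = X (t + s) ω)
    (hP_prob : ∀ x : S, IsProbabilityMeasure (P x))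
    (hP_meas : ∀ Λ : Set Ω, MeasurableSet[F0inf X] Λ → Measurable fun x => P x Λ)
    (hP_start : ∀ x : S, P x {ω | X 0 ω = x} = 1)
    (hMarkov : ∀ (s : ℝ≥0) (x : S) (Y : Ω → ℝ≥0∞), Measurable[F0inf X] Y →
      ∀ Λ : Set Ω, MeasurableSet[F0plus X s] Λ →
        ∫⁻ ω in Λ, Y (θ s ω) ∂(P x)
          = ∫⁻ ω in Λ, (∫⁻ ω', Y ω' ∂(P (X s ω))) ∂(P x))
    :
    (∀ (μ : Measure S), IsProbabilityMeasure μ → ∀ t : ℝ≥0,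
      Mmu Δ α h X P μ t
        = {Λ : Set Ω | ∀ s : ℝ≥0, t < s → Λ ∈ Mmu Δ α h X P μ s}) ∧
    (∀ t : ℝ≥0,
      Mt Δ α h X P t = {Λ : Set Ω | ∀ s : ℝ≥0, t < s → Λ ∈ Mt Δ α h X P s}) := by
  have part1 : ∀ (μ : Measure S), IsProbabilityMeasure μ → ∀ t : ℝ≥0,
      Mmu Δ α h X P μ t
        = {Λ : Set Ω | ∀ s : ℝ≥0, t < s → Λ ∈ Mmu Δ α h X P μ s} := by
    intro μ hμ t
    haveI := hμ
    exact Mmu_right_continuous h_meas h_pos hX_absorb hshift hP_prob hP_meas hP_start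
      hMarkov μ t
  refine ⟨part1, fun t => ?_⟩
  refine Set.Subset.antisymm ?_ ?_
  · intro Λ hΛ s hs μ hμ
    exact Mmu_mono μ (le_of_lt hs) (hΛ μ hμ)
  · intro Λ hΛ μ hμ
    rw [part1 μ hμ t]
    exact fun s hs => hΛ s hs μ hμ
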